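/- Let G be a graph with a cut vertex x of degree 2 (x is a separation clique). Then in any minimum fill-in ordering of G, at the step when x is eliminated, x is simplicial in the current elimination graph, and moreover x has degree at most 1 at that point. -/

import Mathlib

open SimpleGraph

attribute [local instance] Classical.propDecidable

variable {V : Type*} [Fintype V] [DecidableEq V]

/-- The elimination graph `G_x`: delete `x` and complete its neighborhood to a clique.
(The eliminated vertex is kept as an isolated vertex.) -/
def elimG (G : SimpleGraph V) (x : V) : SimpleGraph V where
  Adj u v := u ≠ v ∧ u ≠ x ∧ v ≠ x ∧ (G.Adj u v ∨ (G.Adj x u ∧ G.Adj x v))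
  symm := by
    refine ⟨fun u v h => ?_⟩
    obtain ⟨h1, h2, h3, h4⟩ := h
    refine ⟨h1.symm, h3, h2, ?_⟩
    rcases h4 with h | ⟨h4, h5⟩
    · exact Or.inl h.symm
    · exact Or.inr ⟨h5, h4⟩
  loopless := ⟨fun v h => h.1 rfl⟩

/-- The deficiency `D(x)`: the set of unordered pairs of distinct, non-adjacent
neighbors of `x`. -/
noncomputable def deficiencyFinset (G : SimpleGraph V) (x : V) : Finset (Sym2 V) :=
  ((Finset.univ ×ˢ Finset.univ : Finset (V × V)).filter
    (fun p => p.1 ≠ p.2 ∧ G.Adj x p.1 ∧ G.Adj x p.2 ∧ ¬ G.Adj p.1 p.2)).image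
    (fun p => s(p.1, p.2))

/-- Successive elimination of a list of vertices. -/
def elimList : SimpleGraph V → List V → SimpleGraph V
  | G, [] => G
  | G, x :: xs => elimList (elimG G x) xs

/-- The fill-in of an elimination ordering given as a list: the total number of
edges added during the elimination process. -/
noncomputable def fillList : SimpleGraph V → List V → ℕ
  | _, [] => 0
  | G, x :: xs => (deficiencyFinset G x).card + fillList (elimG G x) xs

/-- The set of fill edges added during the elimination process. -/
noncomputable def fillEdges : SimpleGraph V → List V → Finset (Sym2 V)
  | _, [] => ∅
  | G, x :: xs => deficiencyFinset G x ∪ fillEdges (elimG G x) xs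

/-- A list is an (elimination) ordering if it enumerates every vertex exactly once. -/
def IsOrdering (L : List V) : Prop := L.Nodup ∧ ∀ v : V, v ∈ L

/-- The minimum fill-in `Φ(G)`. -/
noncomputable def minFillIn (G : SimpleGraph V) : ℕ :=
  sInf {n | ∃ L : List V, IsOrdering L ∧ fillList G L = n}

/-- A vertex is simplicial if its neighborhood is a clique. -/
def IsSimplicial (G : SimpleGraph V) (x : V) : Prop :=
  ∀ a b, G.Adj x a → G.Adj x b → a ≠ b → G.Adj a b

/-- `a` and `b` are indistinguishable: equal closed neighborhoods. -/
def Indistinguishable (G : SimpleGraph V) (a b : V) : Prop :=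
  a ≠ b ∧ insert a (G.neighborSet a) = insert b (G.neighborSet b)

/-- `a` and `b` are twins: equal open neighborhoods (hence non-adjacent). -/
def Twins (G : SimpleGraph V) (a b : V) : Prop :=
  a ≠ b ∧ G.neighborSet a = G.neighborSet b

/-- Chordality: no induced cycle of length at least 4, equivalently every cycle of
length at least 4 has a chord. -/
def IsChordal (G : SimpleGraph V) : Prop :=
  ∀ n : ℕ, 4 ≤ n → ∀ f : ZMod n → V, Function.Injective f →
    ¬ (∀ i j : ZMod n, G.Adj (f i) (f j) ↔ (j = i + 1 ∨ i = j + 1))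

/-- `T` is a triangulation of `G`: a set of non-edges whose addition makes `G` chordal. -/
def IsTriangulation (G : SimpleGraph V) (T : Finset (Sym2 V)) : Prop :=
  (∀ e ∈ T, ¬ e.IsDiag ∧ e ∉ G.edgeSet) ∧
    IsChordal (G ⊔ SimpleGraph.fromEdgeSet (↑T : Set (Sym2 V)))

/-- A minimum triangulation. -/
def IsMinTriangulation (G : SimpleGraph V) (T : Finset (Sym2 V)) : Prop :=
  IsTriangulation G T ∧ ∀ T' : Finset (Sym2 V), IsTriangulation G T' → T.card ≤ T'.card

/-- The graph obtained from `G` by deleting the vertices in `S`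
(deleted vertices are kept as isolated vertices). -/
def deleteSet (G : SimpleGraph V) (S : Set V) : SimpleGraph V where
  Adj u v := G.Adj u v ∧ u ∉ S ∧ v ∉ S
  symm := ⟨fun _ _ ⟨h, hu, hv⟩ => ⟨h.symm, hv, hu⟩⟩
  loopless := ⟨fun v h => G.irrefl h.1⟩

set_option linter.unusedSectionVars false
set_option linter.unusedVariables false
set_option maxHeartbeats 1000000

section PartI

variable {G H K : SimpleGraph V} {x y u v w : V}

lemma mem_deficiencyFinset :
    s(u,v) ∈ deficiencyFinset G x ↔ u ≠ v ∧ G.Adj x u ∧ G.Adj x v ∧ ¬ G.Adj u v := by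
  constructor
  · rintro h
    simp only [deficiencyFinset, Finset.mem_image, Finset.mem_filter] at h
    obtain ⟨⟨p1,p2⟩, ⟨-, h1, h2, h3, h4⟩, he⟩ := h
    rcases Sym2.eq_iff.1 he with ⟨rfl, rfl⟩ | ⟨rfl, rfl⟩
    · exact ⟨h1,h2,h3,h4⟩
    · exact ⟨h1.symm, h3, h2, fun hh => h4 hh.symm⟩
  · rintro ⟨h1,h2,h3,h4⟩
    simp only [deficiencyFinset, Finset.mem_image, Finset.mem_filter]
    exact ⟨(u,v), ⟨by simp, h1,h2,h3,h4⟩, rfl⟩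

lemma elimG_adj :
    (elimG G x).Adj u v ↔ u ≠ v ∧ u ≠ x ∧ v ≠ x ∧ (G.Adj u v ∨ (G.Adj x u ∧ G.Adj x v)) :=
  Iff.rfl

lemma elimG_mono (h : G ≤ H) (x : V) : elimG G x ≤ elimG H x := by
  intro u v hadj
  obtain ⟨h1,h2,h3,h4⟩ := hadj
  refine ⟨h1,h2,h3, ?_⟩
  rcases h4 with h4 | ⟨h4,h5⟩
  · exact Or.inl (h h4)
  · exact Or.inr ⟨h h4, h h5⟩

lemma elimList_cons : elimList G (y :: L) = elimList (elimG G y) L := rfl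
lemma fillEdges_cons :
    fillEdges G (y :: L) = deficiencyFinset G y ∪ fillEdges (elimG G y) L := rfl
lemma fillList_cons :
    fillList G (y :: L) = (deficiencyFinset G y).card + fillList (elimG G y) L := rfl

variable {L M : List V}

lemma elimList_mono (h : G ≤ H) : ∀ (L : List V) {G H : SimpleGraph V}, G ≤ H →
    elimList G L ≤ elimList H L := by
  intro L
  induction L with
  | nil => intro G H h; exact h
  | cons y ys ih => intro G H h; exact ih (elimG_mono h y)

lemma iso_elimG (h : ∀ w, ¬ K.Adj u w) (y : V) : ∀ w, ¬ (elimG K y).Adj u w := by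
  intro w hw
  rcases hw.2.2.2 with h1 | ⟨h1, _⟩
  · exact h w h1
  · exact h y h1.symm

lemma iso_elimList (h : ∀ w, ¬ K.Adj u w) : ∀ (L : List V), ∀ w, ¬ (elimList K L).Adj u w := by
  suffices H : ∀ (L : List V) (K : SimpleGraph V), (∀ w, ¬ K.Adj u w) → ∀ w, ¬ (elimList K L).Adj u w by
    intro L; exact H L K h
  intro L
  induction L with
  | nil => intro K h; exact h
  | cons y ys ih => intro K h; exact ih _ (iso_elimG h y)

lemma elimG_self_iso (K : SimpleGraph V) (y : V) : ∀ w, ¬ (elimG K y).Adj y w :=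
  fun _ hw => hw.2.1 rfl

lemma iso_not_mem_fill (h : ∀ w, ¬ K.Adj u w) :
    ∀ (L : List V) (w : V), s(u,w) ∉ fillEdges K L := by
  suffices H : ∀ (L : List V) (K : SimpleGraph V), (∀ w, ¬ K.Adj u w) →
      ∀ w, s(u,w) ∉ fillEdges K L by intro L; exact H L K h
  intro L
  induction L with
  | nil => intro K h w; simp [fillEdges]
  | cons y ys ih =>
    intro K h w hw
    rcases Finset.mem_union.1 hw with hw | hw
    · exact h y (mem_deficiencyFinset.1 hw).2.1.symm
    · exact ih _ (iso_elimG h y) w hw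

lemma adj_not_mem_fill (h : K.Adj u v) : ∀ (L : List V), s(u,v) ∉ fillEdges K L := by
  suffices H : ∀ (L : List V) (K : SimpleGraph V), K.Adj u v → s(u,v) ∉ fillEdges K L by
    intro L; exact H L K h
  intro L
  induction L with
  | nil => intro K h; simp [fillEdges]
  | cons y ys ih =>
    intro K h hw
    rcases Finset.mem_union.1 hw with hw | hw
    · exact (mem_deficiencyFinset.1 hw).2.2.2 h
    · by_cases hu : u = y
      · subst hu; exact iso_not_mem_fill (elimG_self_iso K u) ys v hw
      · by_cases hv : v = y
        · subst hv
          exact iso_not_mem_fill (elimG_self_iso K v) ys u (by rwa [Sym2.eq_swap])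
        · exact ih _ (elimG_adj.2 ⟨h.ne, hu, hv, Or.inl h⟩) hw

lemma fillList_eq_card : ∀ (L : List V) (K : SimpleGraph V),
    fillList K L = (fillEdges K L).card := by
  intro L
  induction L with
  | nil => intro K; rfl
  | cons y ys ih =>
    intro K
    rw [fillList_cons, fillEdges_cons, Finset.card_union_of_disjoint, ih]
    rw [Finset.disjoint_left]
    intro e he he'
    induction e with
    | _ p q =>
      obtain ⟨h1, h2, h3, _⟩ := mem_deficiencyFinset.1 he
      exact adj_not_mem_fill (elimG_adj.2 ⟨h1, h2.ne', h3.ne', Or.inr ⟨h2, h3⟩⟩) ys he'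

lemma elimList_adj_sub : ∀ (L : List V) (K : SimpleGraph V) (u v : V),
    (elimList K L).Adj u v → K.Adj u v ∨ s(u,v) ∈ fillEdges K L := by
  intro L
  induction L with
  | nil => intro K u v h; exact Or.inl h
  | cons y ys ih =>
    intro K u v h
    rcases ih (elimG K y) u v h with h | h
    · rcases (elimG_adj.1 h).2.2.2 with h2 | ⟨h2, h3⟩
      · exact Or.inl h2
      · by_cases hadj : K.Adj u v
        · exact Or.inl hadj
        · exact Or.inr (Finset.mem_union_left _
            (mem_deficiencyFinset.2 ⟨(elimG_adj.1 h).1, h2, h3, hadj⟩))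
    · exact Or.inr (Finset.mem_union_right _ h)

end PartI

section PartII

variable {G H K : SimpleGraph V} {x y u v w : V} {L M : List V}

lemma adj_elimList_or_iso : ∀ (L : List V) (G : SimpleGraph V) (u v : V), G.Adj u v →
    (elimList G L).Adj u v ∨ (∀ w, ¬ (elimList G L).Adj u w) ∨ (∀ w, ¬ (elimList G L).Adj v w) := by
  intro L
  induction L with
  | nil => intro G u v h; exact Or.inl h
  | cons y ys ih =>
    intro G u v h
    by_cases hu : u = y
    · subst hu
      exact Or.inr (Or.inl (iso_elimList (elimG_self_iso G u) ys))
    · by_cases hv : v = y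
      · subst hv
        exact Or.inr (Or.inr (iso_elimList (elimG_self_iso G v) ys))
      · exact ih (elimG G y) u v (elimG_adj.2 ⟨h.ne, hu, hv, Or.inl h⟩)

lemma fillEdges_append : ∀ (L M : List V) (K : SimpleGraph V),
    fillEdges K (L ++ M) = fillEdges K L ∪ fillEdges (elimList K L) M := by
  intro L
  induction L with
  | nil => intro M K; simp [fillEdges, elimList]
  | cons y ys ih =>
    intro M K
    show deficiencyFinset K y ∪ fillEdges (elimG K y) (ys ++ M) = _
    rw [ih, fillEdges_cons, Finset.union_assoc]
    rfl

lemma fill_mono : ∀ (L : List V) (G H : SimpleGraph V), G ≤ H →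
    ∀ e ∈ fillEdges G L, e ∈ fillEdges H L ∨ (e ∈ H.edgeSet ∧ e ∉ G.edgeSet) := by
  intro L
  induction L with
  | nil => intro G H _ e he; simp [fillEdges] at he
  | cons y ys ih =>
    intro G H hle e he
    rcases Finset.mem_union.1 he with he | he
    · induction e with
      | _ p q =>
        obtain ⟨h1, h2, h3, h4⟩ := mem_deficiencyFinset.1 he
        by_cases hH : H.Adj p q
        · exact Or.inr ⟨hH, fun hc => h4 ((SimpleGraph.mem_edgeSet _).1 hc)⟩
        · exact Or.inl (Finset.mem_union_left _
            (mem_deficiencyFinset.2 ⟨h1, hle h2, hle h3, hH⟩))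
    · rcases ih (elimG G y) (elimG H y) (elimG_mono hle y) e he with h | ⟨h1, h2⟩
      · exact Or.inl (Finset.mem_union_right _ h)
      · induction e with
        | _ p q =>
          have hadj : (elimG H y).Adj p q := (SimpleGraph.mem_edgeSet _).1 h1
          have hnadj : ¬ (elimG G y).Adj p q := fun hc => h2 ((SimpleGraph.mem_edgeSet _).2 hc)
          obtain ⟨e1, e2, e3, e4⟩ := elimG_adj.1 hadj
          have hnG : ¬ G.Adj p q := fun hc => hnadj (elimG_adj.2 ⟨e1, e2, e3, Or.inl hc⟩)
          by_cases hH : H.Adj p q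
          · exact Or.inr ⟨(SimpleGraph.mem_edgeSet _).2 hH, fun hc => hnG ((SimpleGraph.mem_edgeSet _).1 hc)⟩
          · rcases e4 with e4 | ⟨e4, e5⟩
            · exact absurd e4 hH
            · exact Or.inl (Finset.mem_union_left _
                (mem_deficiencyFinset.2 ⟨e1, e4, e5, hH⟩))

theorem zeroFill_sup_fill : ∀ (L : List V) (G : SimpleGraph V),
    fillList (G ⊔ fromEdgeSet ↑(fillEdges G L)) L = 0 := by
  intro L
  induction L with
  | nil => intro G; rfl
  | cons y ys ih =>
    intro G
    set D := deficiencyFinset G y with hD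
    set Fr := fillEdges (elimG G y) ys with hFr
    set H := G ⊔ fromEdgeSet ↑(fillEdges G (y :: ys)) with hH
    have hDy : ∀ w, s(y,w) ∉ D := by
      intro w hw
      exact G.irrefl (mem_deficiencyFinset.1 hw).2.1
    have hFry : ∀ w, s(y,w) ∉ Fr := iso_not_mem_fill (elimG_self_iso G y) ys
    have hAdjy : ∀ w, H.Adj y w ↔ G.Adj y w := by
      intro w
      constructor
      · rintro (h | h)
        · exact h
        · obtain ⟨hm, hne⟩ := (SimpleGraph.fromEdgeSet_adj _).1 h
          rcases Finset.mem_union.1 (Finset.mem_coe.1 hm) with hm | hm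
          · exact absurd hm (hDy w)
          · exact absurd hm (hFry w)
      · exact fun h => Or.inl h
    have hdef : deficiencyFinset H y = ∅ := by
      rw [Finset.eq_empty_iff_forall_notMem]
      intro e he
      induction e with
      | _ p q =>
        obtain ⟨h1, h2, h3, h4⟩ := mem_deficiencyFinset.1 he
        have h2' := (hAdjy p).1 h2
        have h3' := (hAdjy q).1 h3
        have hnG : ¬ G.Adj p q := fun hc => h4 (Or.inl hc)
        have hmem : s(p,q) ∈ D := mem_deficiencyFinset.2 ⟨h1, h2', h3', hnG⟩
        exact h4 (Or.inr ((SimpleGraph.fromEdgeSet_adj _).2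
          ⟨Finset.mem_coe.2 (Finset.mem_union_left _ hmem), h1⟩))
    have helim : elimG H y = (elimG G y) ⊔ fromEdgeSet ↑Fr := by
      ext p q
      constructor
      · rintro ⟨hne, hpy, hqy, hc | ⟨hc1, hc2⟩⟩
        · rcases hc with hc | hc
          · exact Or.inl (elimG_adj.2 ⟨hne, hpy, hqy, Or.inl hc⟩)
          · obtain ⟨hm, -⟩ := (SimpleGraph.fromEdgeSet_adj _).1 hc
            rcases Finset.mem_union.1 (Finset.mem_coe.1 hm) with hm | hm
            · obtain ⟨-, m2, m3, -⟩ := mem_deficiencyFinset.1 hm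
              exact Or.inl (elimG_adj.2 ⟨hne, hpy, hqy, Or.inr ⟨m2, m3⟩⟩)
            · exact Or.inr ((SimpleGraph.fromEdgeSet_adj _).2 ⟨Finset.mem_coe.2 hm, hne⟩)
        · exact Or.inl (elimG_adj.2 ⟨hne, hpy, hqy, Or.inr ⟨(hAdjy p).1 hc1, (hAdjy q).1 hc2⟩⟩)
      · rintro (h | h)
        · obtain ⟨hne, hpy, hqy, hc⟩ := elimG_adj.1 h
          refine elimG_adj.2 ⟨hne, hpy, hqy, ?_⟩
          rcases hc with hc | ⟨hc1, hc2⟩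
          · exact Or.inl (Or.inl hc)
          · exact Or.inr ⟨(hAdjy p).2 hc1, (hAdjy q).2 hc2⟩
        · obtain ⟨hm, hne⟩ := (SimpleGraph.fromEdgeSet_adj _).1 h
          have hm' := Finset.mem_coe.1 hm
          have hpy : p ≠ y := by
            rintro rfl
            exact hFry q (by rwa [Sym2.eq_swap] at hm')
          have hqy : q ≠ y := by
            rintro rfl
            exact hFry p (by rwa [Sym2.eq_swap] at hm')
          refine elimG_adj.2 ⟨hne, hpy, hqy, Or.inl (Or.inr ((SimpleGraph.fromEdgeSet_adj _).2
            ⟨Finset.mem_coe.2 (Finset.mem_union_right _ hm'), hne⟩))⟩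
    rw [fillList_cons, hdef, helim]
    simpa using ih (elimG G y)

end PartII

section PartIII
open List

def listPEO (Γ : SimpleGraph V) (l : List V) : Prop :=
  ∀ y u v : V, [y,u] <+ l → [y,v] <+ l → u ≠ v → Γ.Adj y u → Γ.Adj y v → Γ.Adj u v

variable {Γ Γ' : SimpleGraph V} {l : List V} {p q y u v a : V}

lemma pair_sub_mem {M : List V} (h : [p,q] <+ M) : p ∈ M ∧ q ∈ M :=
  ⟨h.subset (by simp), h.subset (by simp)⟩

lemma pair_sub_cons {M : List V} (h : [p,q] <+ a :: M) :
    [p,q] <+ M ∨ (p = a ∧ q ∈ M) := by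
  cases h with
  | cons _ h => exact Or.inl h
  | cons_cons _ h => exact Or.inr ⟨rfl, List.singleton_sublist.1 (by exact h)⟩

lemma pair_cons_of {M : List V} (h : q ∈ M) : [a, q] <+ a :: M :=
  List.Sublist.cons₂ a (List.singleton_sublist.2 h)

lemma pair_append_of {X Y : List V} (hp : p ∈ X) (hq : q ∈ Y) : [p,q] <+ X ++ Y :=
  List.Sublist.append (List.singleton_sublist.2 hp) (List.singleton_sublist.2 hq)

lemma pair_sub_append {X Y : List V} (h : [p,q] <+ X ++ Y) :
    [p,q] <+ X ∨ [p,q] <+ Y ∨ (p ∈ X ∧ q ∈ Y) := by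
  rcases List.sublist_append_iff.1 h with ⟨l₁, l₂, heq, h1, h2⟩
  match l₁, heq with
  | [], heq =>
    rw [List.nil_append] at heq; subst heq
    exact Or.inr (Or.inl h2)
  | [x], heq =>
    have hx : x = p := by simpa using (List.cons.injEq _ _ _ _ ▸ heq :).1.symm
    subst hx
    have hl₂ : l₂ = [q] := by simpa using (List.cons.injEq _ _ _ _ ▸ heq :).2.symm
    subst hl₂
    exact Or.inr (Or.inr ⟨List.singleton_sublist.1 h1, List.singleton_sublist.1 h2⟩)
  | [x, z], heq =>
    have : p = x ∧ q = z ∧ l₂ = [] := by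
      have := heq
      simp only [List.cons_append, List.cons.injEq] at this
      obtain ⟨e1, e2, e3⟩ := this
      exact ⟨e1, e2, by simpa using e3.symm⟩
    obtain ⟨rfl, rfl, rfl⟩ := this
    exact Or.inl h1
  | x :: z :: w :: t, heq =>
    exfalso
    have := congrArg List.length heq
    simp at this

lemma listPEO_sublist {l' : List V} (h : listPEO Γ l) (hs : l' <+ l) : listPEO Γ l' :=
  fun y u v h1 h2 => h y u v (h1.trans hs) (h2.trans hs)

lemma listPEO_transfer
    (h1 : ∀ p q, p ∈ l → q ∈ l → Γ'.Adj p q → Γ.Adj p q)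
    (h2 : ∀ p q, p ∈ l → q ∈ l → Γ.Adj p q → Γ'.Adj p q)
    (h : listPEO Γ l) : listPEO Γ' l := by
  intro y u v hs1 hs2 hne a1 a2
  obtain ⟨hy, hu⟩ := pair_sub_mem hs1
  obtain ⟨-, hv⟩ := pair_sub_mem hs2
  exact h2 u v hu hv (h y u v hs1 hs2 hne (h1 y u hy hu a1) (h1 y v hy hv a2))

lemma fillEdges_empty_of_listPEO : ∀ (l : List V) (Γ : SimpleGraph V), listPEO Γ l →
    l.Nodup → (∀ p q, Γ.Adj p q → p ∈ l) → fillEdges Γ l = ∅ := by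
  intro l
  induction l with
  | nil => intro Γ _ _ _; rfl
  | cons y t ih =>
    intro Γ hpeo hnd hcov
    have hyt : y ∉ t := (List.nodup_cons.1 hnd).1
    have hmemt : ∀ p, Γ.Adj y p → p ∈ t := by
      intro p hp
      rcases List.mem_cons.1 (hcov p y hp.symm) with rfl | h
      · exact absurd rfl hp.ne'
      · exact h
    have hD : deficiencyFinset Γ y = ∅ := by
      rw [Finset.eq_empty_iff_forall_notMem]
      intro e he
      induction e with
      | _ p q =>
        obtain ⟨h1, h2, h3, h4⟩ := mem_deficiencyFinset.1 he
        exact h4 (hpeo y p q (pair_cons_of (hmemt p h2)) (pair_cons_of (hmemt q h3)) h1 h2 h3)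
    have hiff : ∀ p q, p ≠ y → q ≠ y → ((elimG Γ y).Adj p q ↔ Γ.Adj p q) := by
      intro p q hp hq
      constructor
      · rintro ⟨h1, -, -, hc | ⟨hc1, hc2⟩⟩
        · exact hc
        · exact hpeo y p q (pair_cons_of (hmemt p hc1)) (pair_cons_of (hmemt q hc2)) h1 hc1 hc2
      · intro h; exact elimG_adj.2 ⟨h.ne, hp, hq, Or.inl h⟩
    have hpeo' : listPEO (elimG Γ y) t := by
      intro z p q hs1 hs2 hne a1 a2
      obtain ⟨hz, hp⟩ := pair_sub_mem hs1
      obtain ⟨-, hq⟩ := pair_sub_mem hs2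
      have hzy : z ≠ y := fun hc => hyt (hc ▸ hz)
      have hpy : p ≠ y := fun hc => hyt (hc ▸ hp)
      have hqy : q ≠ y := fun hc => hyt (hc ▸ hq)
      exact (hiff p q hpy hqy).2 (hpeo z p q (hs1.cons y) (hs2.cons y) hne
        ((hiff z p hzy hpy).1 a1) ((hiff z q hzy hqy).1 a2))
    have hcov' : ∀ p q, (elimG Γ y).Adj p q → p ∈ t := by
      intro p q hadj
      obtain ⟨-, hpy, -, hc⟩ := elimG_adj.1 hadj
      rcases hc with hc | ⟨hc, -⟩
      · rcases List.mem_cons.1 (hcov p q hc) with rfl | h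
        · exact absurd rfl hpy
        · exact h
      · exact hmemt p hc
    rw [fillEdges_cons, hD, ih (elimG Γ y) hpeo' (List.nodup_cons.1 hnd).2 hcov']
    simp

lemma listPEO_of_fillList_zero : ∀ (l : List V) (Γ : SimpleGraph V),
    fillList Γ l = 0 → l.Nodup → listPEO Γ l := by
  intro l
  induction l with
  | nil => intro Γ _ _ y u v h; cases (List.sublist_nil.1 h)
  | cons y t ih =>
    intro Γ h0 hnd
    rw [fillList_cons, Nat.add_eq_zero] at h0
    have hD : ∀ p q, p ≠ q → Γ.Adj y p → Γ.Adj y q → Γ.Adj p q := by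
      intro p q hne h1 h2
      by_contra hc
      have : s(p,q) ∈ deficiencyFinset Γ y := mem_deficiencyFinset.2 ⟨hne, h1, h2, hc⟩
      rw [Finset.card_eq_zero.1 h0.1] at this
      exact absurd this (Finset.notMem_empty _)
    have hyt : y ∉ t := (List.nodup_cons.1 hnd).1
    have hiff : ∀ p q, p ≠ y → q ≠ y → ((elimG Γ y).Adj p q ↔ Γ.Adj p q) := by
      intro p q hp hq
      constructor
      · rintro ⟨h1, -, -, hc | ⟨hc1, hc2⟩⟩
        · exact hc
        · exact hD p q h1 hc1 hc2
      · intro h; exact elimG_adj.2 ⟨h.ne, hp, hq, Or.inl h⟩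
    have hpeo' : listPEO (elimG Γ y) t := ih (elimG Γ y) h0.2 (List.nodup_cons.1 hnd).2
    intro z u v hs1 hs2 hne a1 a2
    rcases pair_sub_cons hs1 with hs1' | ⟨rfl, hu⟩
    · rcases pair_sub_cons hs2 with hs2' | ⟨rfl, hv⟩
      · have hz : z ≠ y := fun hc => hyt (hc ▸ (pair_sub_mem hs1').1)
        have hu' : u ≠ y := fun hc => hyt (hc ▸ (pair_sub_mem hs1').2)
        have hv' : v ≠ y := fun hc => hyt (hc ▸ (pair_sub_mem hs2').2)
        exact (hiff u v hu' hv').1 (hpeo' z u v hs1' hs2' hne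
          ((hiff z u hz hu').2 a1) ((hiff z v hz hv').2 a2))
      · exact absurd (pair_sub_mem hs1').1 hyt
    · rcases pair_sub_cons hs2 with hs2' | ⟨-, hv⟩
      · exact absurd (pair_sub_mem hs2').1 hyt
      · exact hD u v hne a1 a2

end PartIII

section Big
open List
variable {Γ : SimpleGraph V}

lemma peo_clique_suffix :
    ∀ (l : List V), l.Nodup → listPEO Γ l → ∀ (C : Finset V),
      (∀ u ∈ C, ∀ v ∈ C, u ≠ v → Γ.Adj u v) → (∀ u ∈ C, u ∈ l) →
      ∃ l₀ l₁ : List V, (l₀ ++ l₁) ~ l ∧ listPEO Γ (l₀ ++ l₁) ∧ (∀ w, w ∈ l₁ ↔ w ∈ C) := by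
  intro l
  induction l with
  | nil =>
    intro _ _ C hC hCl
    refine ⟨[], [], List.Perm.refl _, ?_, ?_⟩
    · intro y u v h; cases (List.sublist_nil.1 h)
    · intro w
      constructor
      · intro hw; cases hw
      · intro hw; exact absurd (hCl w hw) (by simp)
  | cons a rest ih =>
    intro hnd hpeo C hC hCl
    have hna : a ∉ rest := (List.nodup_cons.1 hnd).1
    have hnd' : rest.Nodup := (List.nodup_cons.1 hnd).2
    have hpeo' : listPEO Γ rest := listPEO_sublist hpeo (List.sublist_cons_self a rest)
    by_cases haC : a ∈ C
    · -- hard case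
      set C' : Finset V := rest.toFinset.filter (fun w => Γ.Adj a w) with hC'def
      have hC'mem : ∀ w, w ∈ C' ↔ (w ∈ rest ∧ Γ.Adj a w) := by
        intro w; simp [hC'def]
      have hC'cl : ∀ u ∈ C', ∀ v ∈ C', u ≠ v → Γ.Adj u v := by
        intro u hu v hv hne
        obtain ⟨hur, hua⟩ := (hC'mem u).1 hu
        obtain ⟨hvr, hva⟩ := (hC'mem v).1 hv
        exact hpeo a u v (pair_cons_of hur) (pair_cons_of hvr) hne hua hva
      have hC'l : ∀ u ∈ C', u ∈ rest := fun u hu => ((hC'mem u).1 hu).1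
      obtain ⟨l₀, blk, hperm, hpeoo, hmem⟩ := ih hnd' hpeo' C' hC'cl hC'l
      set blk₁ : List V := blk.filter (fun w => !decide (w ∈ C)) with hblk₁
      set blk₂ : List V := blk.filter (fun w => decide (w ∈ C)) with hblk₂
      have hndρ : (l₀ ++ blk).Nodup := hperm.nodup_iff.2 hnd'
      have hdisj : ∀ w ∈ l₀, w ∉ blk := by
        have := (List.nodup_append.1 hndρ).2.2
        intro w hw hb; exact this w hw w hb rfl
      have hsubρ : ∀ w, w ∈ l₀ ++ blk ↔ w ∈ rest := fun w => hperm.mem_iff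
      have hl₀r : ∀ w ∈ l₀, w ∈ rest := fun w hw => (hsubρ w).1 (List.mem_append_left _ hw)
      have hblkr : ∀ w ∈ blk, w ∈ rest := fun w hw => (hsubρ w).1 (List.mem_append_right _ hw)
      have K1 : ∀ w ∈ blk, Γ.Adj a w := fun w hw => ((hC'mem w).1 ((hmem w).1 hw)).2
      have K2 : ∀ w, Γ.Adj a w → w ∈ rest → w ∈ blk :=
        fun w h1 h2 => (hmem w).2 ((hC'mem w).2 ⟨h2, h1⟩)
      have K3 : ∀ w ∈ l₀, ¬ Γ.Adj a w :=
        fun w hw hc => (hdisj w hw) (K2 w hc (hl₀r w hw))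
      have hblk1b : ∀ w ∈ blk₁, w ∈ blk := fun w hw => (List.mem_filter.1 hw).1
      have hblk2b : ∀ w ∈ blk₂, w ∈ blk := fun w hw => (List.mem_filter.1 hw).1
      have hblk2C : ∀ w ∈ blk₂, w ∈ C := by
        intro w hw
        have := (List.mem_filter.1 hw).2
        simpa using this
      have hblk1C : ∀ w ∈ blk₁, w ∉ C := by
        intro w hw
        have := (List.mem_filter.1 hw).2
        simpa using this
      have hanb : a ∉ blk := fun h => hna (hblkr a h)
      have hanl₀ : a ∉ l₀ := fun h => hna (hl₀r a h)
      refine ⟨l₀ ++ blk₁, a :: blk₂, ?_, ?_, ?_⟩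
      · -- permutation
        calc (l₀ ++ blk₁) ++ a :: blk₂ ~ a :: ((l₀ ++ blk₁) ++ blk₂) := List.perm_middle
        _ = a :: (l₀ ++ (blk₁ ++ blk₂)) := by rw [List.append_assoc]
        _ ~ a :: (l₀ ++ blk) := by
            refine List.Perm.cons a (List.Perm.append_left l₀ ?_)
            calc blk₁ ++ blk₂ ~ blk₂ ++ blk₁ := List.perm_append_comm
            _ ~ blk := List.filter_append_perm _ blk
        _ ~ a :: rest := List.Perm.cons a hperm
      · -- listPEO
        intro y u v h1 h2 hne a1 a2
        have hsubX : l₀ ++ blk₁ <+ l₀ ++ blk :=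
          List.Sublist.append (List.Sublist.refl l₀) (List.filter_sublist : List.filter _ blk <+ blk)
        have getX : ∀ p, p ∈ l₀ ∨ p ∈ blk₁ → [y,p] <+ (l₀ ++ blk₁) ++ a :: blk₂ →
            [y,p] <+ l₀ ++ blk₁ := by
          intro p hp hs
          have hpna : p ≠ a := by
            rintro rfl
            rcases hp with hp | hp
            · exact hanl₀ hp
            · exact hanb (hblk1b _ hp)
          have hpnb2 : p ∉ blk₂ := by
            intro hmem2
            rcases hp with hp | hp
            · exact hdisj p hp (hblk2b _ hmem2)
            · exact hblk1C p hp (hblk2C p hmem2)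
          rcases pair_sub_append hs with h | h | ⟨-, h⟩
          · exact h
          · exfalso
            rcases pair_sub_cons h with h | ⟨-, h⟩
            · exact hpnb2 (pair_sub_mem h).2
            · exact hpnb2 h
          · exfalso
            rcases List.mem_cons.1 h with h | h
            · exact hpna h
            · exact hpnb2 h
        have main : ∀ p q, p ∈ l₀ → [y,p] <+ (l₀ ++ blk₁) ++ a :: blk₂ →
            [y,q] <+ (l₀ ++ blk₁) ++ a :: blk₂ → p ≠ q → Γ.Adj y p → Γ.Adj y q → Γ.Adj p q := by
          intro p q hpl hs1 hs2 hne' b1 b2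
          have hX1 : [y,p] <+ l₀ ++ blk₁ := getX p (Or.inl hpl) hs1
          have hyl₀ : y ∈ l₀ := by
            rcases pair_sub_append hX1 with h | h | ⟨h, -⟩
            · exact (pair_sub_mem h).1
            · exfalso
              exact hdisj p hpl (hblk1b _ (pair_sub_mem h).2)
            · exact h
          -- q cases
          have hqmem : q ∈ (l₀ ++ blk₁) ++ a :: blk₂ := (pair_sub_mem hs2).2
          have hqcases : q ∈ l₀ ∨ q ∈ blk₁ ∨ q = a ∨ q ∈ blk₂ := by
            rcases List.mem_append.1 hqmem with h | h
            · rcases List.mem_append.1 h with h | h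
              · exact Or.inl h
              · exact Or.inr (Or.inl h)
            · rcases List.mem_cons.1 h with h | h
              · exact Or.inr (Or.inr (Or.inl h))
              · exact Or.inr (Or.inr (Or.inr h))
          rcases hqcases with hq | hq | rfl | hq
          · exact hpeoo y p q (hX1.trans hsubX) ((getX q (Or.inl hq) hs2).trans hsubX) hne' b1 b2
          · exact hpeoo y p q (hX1.trans hsubX) ((getX q (Or.inr hq) hs2).trans hsubX) hne' b1 b2
          · exact absurd b2.symm (K3 y hyl₀)
          · exact hpeoo y p q (hX1.trans hsubX) (pair_append_of hyl₀ (hblk2b _ hq)) hne' b1 b2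
        by_cases hul : u ∈ l₀
        · exact main u v hul h1 h2 hne a1 a2
        · by_cases hvl : v ∈ l₀
          · exact (main v u hvl h2 h1 hne.symm a2 a1).symm
          · -- both u,v in blk ∪ {a}
            have humem : u ∈ (l₀ ++ blk₁) ++ a :: blk₂ := (pair_sub_mem h1).2
            have hvmem : v ∈ (l₀ ++ blk₁) ++ a :: blk₂ := (pair_sub_mem h2).2
            have hublk : u = a ∨ u ∈ blk := by
              rcases List.mem_append.1 humem with h | h
              · rcases List.mem_append.1 h with h | h
                · exact absurd h hul
                · exact Or.inr (hblk1b _ h)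
              · rcases List.mem_cons.1 h with h | h
                · exact Or.inl h
                · exact Or.inr (hblk2b _ h)
            have hvblk : v = a ∨ v ∈ blk := by
              rcases List.mem_append.1 hvmem with h | h
              · rcases List.mem_append.1 h with h | h
                · exact absurd h hvl
                · exact Or.inr (hblk1b _ h)
              · rcases List.mem_cons.1 h with h | h
                · exact Or.inl h
                · exact Or.inr (hblk2b _ h)
            rcases hublk with rfl | hub
            · rcases hvblk with rfl | hvb
              · exact absurd rfl hne
              · exact K1 v hvb
            · rcases hvblk with rfl | hvb
              · exact (K1 u hub).symm
              · exact hC'cl u ((hmem u).1 hub) v ((hmem v).1 hvb) hne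
      · -- membership of suffix
        intro w
        constructor
        · intro hw
          rcases List.mem_cons.1 hw with rfl | hw
          · exact haC
          · exact hblk2C w hw
        · intro hw
          by_cases hwa : w = a
          · exact hwa ▸ (List.mem_cons_self : a ∈ a :: blk₂)
          · have hwr : w ∈ rest := by
              rcases List.mem_cons.1 (hCl w hw) with h | h
              · exact absurd h hwa
              · exact h
            have : w ∈ blk := K2 w (hC a haC w hw (Ne.symm hwa)) hwr
            exact List.mem_cons_of_mem a (List.mem_filter.2 ⟨this, by simpa using hw⟩)
    · -- easy case : a ∉ C
      have hCl' : ∀ u ∈ C, u ∈ rest := by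
        intro u hu
        rcases List.mem_cons.1 (hCl u hu) with rfl | h
        · exact absurd hu haC
        · exact h
      obtain ⟨l₀, l₁, hperm, hpeoo, hmem⟩ := ih hnd' hpeo' C hC hCl'
      have hnaM : a ∉ l₀ ++ l₁ := fun h => hna (hperm.mem_iff.1 h)
      refine ⟨a :: l₀, l₁, ?_, ?_, hmem⟩
      · exact (List.cons_append : (a :: l₀) ++ l₁ = a :: (l₀ ++ l₁)) ▸ hperm.cons a
      · intro y u v h1 h2 hne a1 a2
        rw [List.cons_append] at h1 h2
        rcases pair_sub_cons h1 with h1' | ⟨rfl, hu⟩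
        · rcases pair_sub_cons h2 with h2' | ⟨rfl, hv⟩
          · exact hpeoo y u v h1' h2' hne a1 a2
          · exact absurd (pair_sub_mem h1').1 hnaM
        · rcases pair_sub_cons h2 with h2' | ⟨-, hv⟩
          · exact absurd (pair_sub_mem h2').1 hnaM
          · have hur : u ∈ rest := hperm.mem_iff.1 hu
            have hvr : v ∈ rest := hperm.mem_iff.1 hv
            exact hpeo y u v (pair_cons_of hur) (pair_cons_of hvr) hne a1 a2

end Big

lemma walk_end_iso {K : SimpleGraph V} : ∀ (u t : V) (p : K.Walk u t),
    (∀ w, ¬ K.Adj w t) → u = t := by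
  intro u t p
  induction p with
  | nil => intro _; rfl
  | @cons u w t h p ih =>
    intro hiso
    exact absurd ((ih hiso) ▸ h) (hiso u)


open List

/-- if `x` is a cut vertex of degree 2, then in any minimum fill-in
ordering, at the step when `x` is eliminated, `x` is simplicial in the current
elimination graph and has degree at most 1 there. -/
theorem stmt_16 (G : SimpleGraph V) (x : V)
    (hdeg : G.degree x = 2)
    (hcut : ∃ u v : V, u ≠ x ∧ v ≠ x ∧ G.Reachable u v ∧
      ¬ (deleteSet G {x}).Reachable u v) :
    ∀ L : List V, IsOrdering L → fillList G L = minFillIn G →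
      ∀ L1 L2 : List V, L = L1 ++ x :: L2 →
        IsSimplicial (elimList G L1) x ∧ (elimList G L1).degree x ≤ 1 := by

  classical
  obtain ⟨cu, cv, hcu, hcv, hcr, hcnr⟩ := hcut
  have hdeg' : (G.neighborFinset x).card = 2 := hdeg
  obtain ⟨a, b, hab, hset⟩ := Finset.card_eq_two.1 hdeg'
  have hxa : G.Adj x a := by
    have : a ∈ G.neighborFinset x := by rw [hset]; simp
    exact (SimpleGraph.mem_neighborFinset G x a).1 this
  have hxb : G.Adj x b := by
    have : b ∈ G.neighborFinset x := by rw [hset]; simp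
    exact (SimpleGraph.mem_neighborFinset G x b).1 this
  have hnbr : ∀ w, G.Adj x w → w = a ∨ w = b := by
    intro w hw
    have : w ∈ G.neighborFinset x := (SimpleGraph.mem_neighborFinset G x w).2 hw
    rw [hset] at this
    simpa using this
  set Gx := deleteSet G {x} with hGxdef
  have hGxadj : ∀ u v : V, Gx.Adj u v ↔ (G.Adj u v ∧ u ≠ x ∧ v ≠ x) := by
    intro u v
    constructor
    · rintro ⟨h1, h2, h3⟩
      exact ⟨h1, by simpa using h2, by simpa using h3⟩
    · rintro ⟨h1, h2, h3⟩
      exact ⟨h1, by simpa using h2, by simpa using h3⟩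
  have hnox : ∀ (u : V) (p : Gx.Walk u x), u = x := by
    intro u p
    refine walk_end_iso u x p ?_
    intro w hw
    exact ((hGxadj w x).1 hw).2.2 rfl
  have walklem : Gx.Reachable a b → ∀ u v : V, u ≠ x → v ≠ x → G.Reachable u v →
      Gx.Reachable u v := by
    intro hab'
    have key : ∀ n (u v : V), u ≠ x → v ≠ x → ∀ (p : G.Walk u v), p.length ≤ n →
        Gx.Reachable u v := by
      intro n
      induction n with
      | zero =>
        intro u v hu hv p hlen
        cases p with
        | nil => exact SimpleGraph.Reachable.refl u
        | cons h q => simp [SimpleGraph.Walk.length_cons] at hlen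
      | succ n ihn =>
        intro u v hu hv p hlen
        cases p with
        | nil => exact SimpleGraph.Reachable.refl u
        | @cons _ w _ h q =>
          by_cases hw : w = x
          · subst hw
            cases q with
            | nil => exact absurd rfl hv
            | @cons _ w2 _ h2 q2 =>
              have hw2 : w2 = a ∨ w2 = b := hnbr _ h2
              have hu' : u = a ∨ u = b := hnbr _ h.symm
              have hw2x := h2.ne'
              have r1 : Gx.Reachable u w2 := by
                rcases hu' with rfl | rfl <;> rcases hw2 with rfl | rfl
                · exact SimpleGraph.Reachable.refl _
                · exact hab'
                · exact hab'.symm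
                · exact SimpleGraph.Reachable.refl _
              have hlen2 : q2.length ≤ n := by
                simp [SimpleGraph.Walk.length_cons] at hlen
                omega
              exact r1.trans (ihn w2 v hw2x hv q2 hlen2)
          · have hlen2 : q.length ≤ n := by
              simp [SimpleGraph.Walk.length_cons] at hlen
              omega
            have hadj : Gx.Adj u w := (hGxadj u w).2 ⟨h, hu, hw⟩
            exact hadj.reachable.trans (ihn w v hw hv q hlen2)
    intro u v hu hv hr
    obtain ⟨p⟩ := hr
    exact key p.length u v hu hv p le_rfl
  have hreach : ¬ Gx.Reachable a b := fun h => hcnr (walklem h cu cv hcu hcv hcr)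
  have hGab : ¬ G.Adj a b := by
    intro h
    exact hreach ((hGxadj a b).2 ⟨h, hxa.ne', hxb.ne'⟩).reachable
  set A : Set V := {w | Gx.Reachable a w} with hAdef
  have haA : a ∈ A := SimpleGraph.Reachable.refl a
  have hbA : b ∉ A := hreach
  have hxAmem : x ∉ A := by
    intro h
    obtain ⟨p⟩ := (h : Gx.Reachable a x)
    exact hxa.ne' (hnox a p)
  have hside : ∀ u v : V, G.Adj u v → u ≠ x → v ≠ x → (u ∈ A ↔ v ∈ A) := by
    intro u v h hu hv
    have hadj : Gx.Adj u v := (hGxadj u v).2 ⟨h, hu, hv⟩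
    exact ⟨fun hr => hr.trans hadj.reachable, fun hr => hr.trans hadj.symm.reachable⟩
  intro L hOrd hmin L1 L2 hLdec
  subst hLdec
  set L : List V := L1 ++ x :: L2 with hLdef
  set F := fillEdges G L with hFdef
  have hcardF : fillList G L = F.card := fillList_eq_card L G
  set HF := G ⊔ fromEdgeSet (↑F : Set (Sym2 V)) with hHFdef
  have hzero : fillList HF L = 0 := zeroFill_sup_fill L G
  have hLnd : L.Nodup := hOrd.1
  have hpeoHF : listPEO HF L := listPEO_of_fillList_zero L HF hzero hLnd
  set Good : Sym2 V → Prop :=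
    fun e => x ∉ e ∧ ∀ p q : V, e = s(p,q) → (p ∈ A ↔ q ∈ A) with hGooddef
  set T' : Finset (Sym2 V) := F.filter Good with hT'def
  set H' := G ⊔ fromEdgeSet (↑T' : Set (Sym2 V)) with hH'def
  have hGH' : G ≤ H' := le_sup_left
  have hH'HF : ∀ p q, H'.Adj p q → HF.Adj p q := by
    intro p q h
    rcases (SimpleGraph.sup_adj _ _ _ _).1 h with h | h
    · exact (SimpleGraph.sup_adj _ _ _ _).2 (Or.inl h)
    · obtain ⟨hm, hne⟩ := (SimpleGraph.fromEdgeSet_adj _).1 h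
      exact (SimpleGraph.sup_adj _ _ _ _).2 (Or.inr ((SimpleGraph.fromEdgeSet_adj _).2
        ⟨Finset.mem_coe.2 (Finset.mem_of_mem_filter _ (Finset.mem_coe.1 hm)), hne⟩))
  have hGoodmk : ∀ p q : V, p ≠ x → q ≠ x → (p ∈ A ↔ q ∈ A) → Good s(p,q) := by
    intro p q hp hq hiff
    constructor
    · rw [Sym2.mem_iff]
      rintro (rfl | rfl)
      · exact hp rfl
      · exact hq rfl
    · intro p' q' he
      rcases Sym2.eq_iff.1 he with ⟨rfl, rfl⟩ | ⟨rfl, rfl⟩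
      · exact hiff
      · exact hiff.symm
  have htransfer : ∀ p q : V, p ≠ x → q ≠ x → (p ∈ A ↔ q ∈ A) → HF.Adj p q → H'.Adj p q := by
    intro p q hp hq hiff h
    rcases (SimpleGraph.sup_adj _ _ _ _).1 h with h | h
    · exact (SimpleGraph.sup_adj _ _ _ _).2 (Or.inl h)
    · obtain ⟨hm, hne⟩ := (SimpleGraph.fromEdgeSet_adj _).1 h
      refine (SimpleGraph.sup_adj _ _ _ _).2 (Or.inr ((SimpleGraph.fromEdgeSet_adj _).2 ⟨?_, hne⟩))
      exact Finset.mem_coe.2 (Finset.mem_filter.2 ⟨Finset.mem_coe.1 hm, hGoodmk p q hp hq hiff⟩)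
  set σA : List V := L.filter (fun w => decide (w ∈ A)) with hσAdef
  set σB : List V := L.filter (fun w => !decide (w = x) && !decide (w ∈ A)) with hσBdef
  have hσAmem : ∀ w, w ∈ σA ↔ (w ∈ L ∧ w ∈ A) := by
    intro w; rw [hσAdef]; simp
  have hσBmem : ∀ w, w ∈ σB ↔ (w ∈ L ∧ w ≠ x ∧ w ∉ A) := by
    intro w; rw [hσBdef]; simp
  have hσAnd : σA.Nodup := (List.filter_sublist : List.filter _ L <+ L).nodup hLnd
  have hσBnd : σB.Nodup := (List.filter_sublist : List.filter _ L <+ L).nodup hLnd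
  have hpeoσA : listPEO H' σA := by
    refine listPEO_transfer (fun p q _ _ h => hH'HF p q h) ?_
      (listPEO_sublist hpeoHF (by rw [hσAdef]; exact List.filter_sublist))
    intro p q hp hq h
    have hpA : p ∈ A := ((hσAmem p).1 hp).2
    have hqA : q ∈ A := ((hσAmem q).1 hq).2
    exact htransfer p q (fun hc => hxAmem (hc ▸ hpA)) (fun hc => hxAmem (hc ▸ hqA))
      (iff_of_true hpA hqA) h
  have hpeoσB : listPEO H' σB := by
    refine listPEO_transfer (fun p q _ _ h => hH'HF p q h) ?_
      (listPEO_sublist hpeoHF (by rw [hσBdef]; exact List.filter_sublist))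
    intro p q hp hq h
    have hpB := (hσBmem p).1 hp
    have hqB := (hσBmem q).1 hq
    exact htransfer p q hpB.2.1 hqB.2.1 (iff_of_false hpB.2.2 hqB.2.2) h
  obtain ⟨l₀, l₁, hpermA, hpeoA, hmemA⟩ := peo_clique_suffix σA hσAnd hpeoσA {a}
    (by intro u hu v hv hne
        simp only [Finset.mem_singleton] at hu hv
        exact absurd (hu.trans hv.symm) hne)
    (by intro u hu
        simp only [Finset.mem_singleton] at hu
        rw [hu]
        exact (hσAmem a).2 ⟨hOrd.2 a, haA⟩)
  set ρA : List V := l₀ ++ l₁ with hρAdef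
  set τ : List V := ρA ++ x :: σB with hτdef
  have hτperm : τ ~ L := by
    have h2 : (x :: σB : List V) ~ L.filter (fun w => !decide (w ∈ A)) := by
      set σX : List V := L.filter (fun w => !decide (w ∈ A)) with hσXdef
      have hxσX : x ∈ σX := by
        rw [hσXdef]
        refine List.mem_filter.2 ⟨hOrd.2 x, ?_⟩
        simp [hxAmem]
      have hσXnd : σX.Nodup := (List.filter_sublist : List.filter _ L <+ L).nodup hLnd
      have e1 : σX.filter (fun w => decide (w = x)) = [x] := by
        rw [List.filter_eq, List.count_eq_one_of_mem hσXnd hxσX]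
        rfl
      have e2 : σX.filter (fun w => !decide (w = x)) = σB := by
        rw [hσXdef, List.filter_filter, hσBdef]
      calc (x :: σB : List V)
          = σX.filter (fun w => decide (w = x)) ++ σX.filter (fun w => !decide (w = x)) := by
            rw [e1, e2]; rfl
        _ ~ σX := List.filter_append_perm _ σX
    calc τ ~ σA ++ x :: σB := List.Perm.append_right _ hpermA
      _ ~ σA ++ L.filter (fun w => !decide (w ∈ A)) := List.Perm.append_left σA h2
      _ ~ L := by rw [hσAdef]; exact List.filter_append_perm _ L
  have hτnd : τ.Nodup := hτperm.nodup_iff.2 hLnd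
  have hτmem : ∀ w : V, w ∈ τ := fun w => hτperm.mem_iff.2 (hOrd.2 w)
  have hOrdτ : IsOrdering τ := ⟨hτnd, hτmem⟩
  have hρAmem : ∀ w, w ∈ ρA ↔ (w ∈ L ∧ w ∈ A) := fun w => (hpermA.mem_iff).trans (hσAmem w)
  have hndρA : ρA.Nodup := hpermA.nodup_iff.2 hσAnd
  have hal₁ : a ∈ l₁ := (hmemA a).2 (by simp)
  have hanl₀ : a ∉ l₀ := fun h => (List.nodup_append.1 hndρA).2.2 a h a hal₁ rfl
  have hl₁a : ∀ w ∈ l₁, w = a := by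
    intro w hw
    have := (hmemA w).1 hw
    simpa using this
  have hH'xadj : ∀ w, H'.Adj x w → G.Adj x w := by
    intro w h
    rcases (SimpleGraph.sup_adj _ _ _ _).1 h with h | h
    · exact h
    · obtain ⟨hm, -⟩ := (SimpleGraph.fromEdgeSet_adj _).1 h
      have hg := (Finset.mem_filter.1 (Finset.mem_coe.1 hm)).2
      exact absurd (by rw [Sym2.mem_iff]; exact Or.inl rfl) hg.1
  have hH'sideadj : ∀ p q, H'.Adj p q → p ≠ x → q ≠ x → (p ∈ A ↔ q ∈ A) := by
    intro p q h hp hq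
    rcases (SimpleGraph.sup_adj _ _ _ _).1 h with h | h
    · exact hside p q h hp hq
    · obtain ⟨hm, -⟩ := (SimpleGraph.fromEdgeSet_adj _).1 h
      exact (Finset.mem_filter.1 (Finset.mem_coe.1 hm)).2.2 p q rfl
  have hxρA : x ∉ ρA := fun h => hxAmem ((hρAmem x).1 h).2
  have hxσB : x ∉ σB := fun h => ((hσBmem x).1 h).2.1 rfl
  have hpeoτ : listPEO H' τ := by
    intro y u v h1 h2 hne a1 a2
    have locmem : ∀ w, w ∈ τ → (w ∈ ρA ∨ w = x ∨ w ∈ σB) := by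
      intro w hw
      rcases List.mem_append.1 hw with h | h
      · exact Or.inl h
      · rcases List.mem_cons.1 h with h | h
        · exact Or.inr (Or.inl h)
        · exact Or.inr (Or.inr h)
    have decomp : ∀ p q : V, [p, q] <+ τ → p ∈ ρA →
        ([p,q] <+ ρA ∨ (q = x ∨ q ∈ σB)) := by
      intro p q hs hp
      rcases pair_sub_append hs with h | h | ⟨-, hq⟩
      · exact Or.inl h
      · exfalso
        rcases pair_sub_cons h with h | ⟨rfl, -⟩
        · have hpB := (hσBmem p).1 (pair_sub_mem h).1
          exact hpB.2.2 ((hρAmem p).1 hp).2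
        · exact hxρA hp
      · rcases List.mem_cons.1 hq with h' | h'
        · exact Or.inr (Or.inl h')
        · exact Or.inr (Or.inr h')
    have decompB : ∀ p q : V, [p,q] <+ τ → p ≠ x → p ∉ A → [p,q] <+ σB := by
      intro p q hs hpx hpA
      have hpρ : p ∉ ρA := fun h => hpA ((hρAmem p).1 h).2
      rcases pair_sub_append hs with h | h | ⟨h, -⟩
      · exact absurd (pair_sub_mem h).1 hpρ
      · rcases pair_sub_cons h with h | ⟨hpx', -⟩
        · exact h
        · exact absurd hpx' hpx
      · exact absurd h hpρ
    have decompX : ∀ q : V, [x, q] <+ τ → q ∈ σB := by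
      intro q hs
      rcases pair_sub_append hs with h | h | ⟨h, -⟩
      · exact absurd (pair_sub_mem h).1 hxρA
      · rcases pair_sub_cons h with h | ⟨-, hq⟩
        · exact absurd (pair_sub_mem h).1 hxσB
        · exact hq
      · exact absurd h hxρA
    have hρAa : ∀ q : V, [a, q] <+ ρA → q = a := by
      intro q hs
      rcases pair_sub_append hs with h | h | ⟨h, -⟩
      · exact absurd (pair_sub_mem h).1 hanl₀
      · exact hl₁a q (pair_sub_mem h).2
      · exact absurd h hanl₀
    have hyτ : y ∈ τ := (pair_sub_mem h1).1
    rcases locmem y hyτ with hy | rfl | hy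
    · -- y ∈ ρA
      have hyA : y ∈ A := ((hρAmem y).1 hy).2
      have hynx : y ≠ x := fun h => hxAmem (h ▸ hyA)
      have hyaOf : ∀ w : V, H'.Adj y x → y = a := by
        intro _ hadj
        rcases hnbr y (hH'xadj y hadj.symm) with h | rfl
        · exact h
        · exact absurd hyA hbA
      rcases decomp y u h1 hy with hsu | rfl | hu
      · rcases decomp y v h2 hy with hsv | rfl | hv
        · exact hpeoA y u v hsu hsv hne a1 a2
        · -- v = x
          have hya : y = a := hyaOf y a2
          rw [hya] at hsu a1
          have hua : u = a := hρAa u hsu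
          rw [hua] at a1
          exact (H'.irrefl a1).elim
        · have hvB := (hσBmem v).1 hv
          exact (hvB.2.2 ((hH'sideadj y v a2 hynx hvB.2.1).1 hyA)).elim
      · -- u = x
        have hya : y = a := hyaOf y a1
        rcases decomp y v h2 hy with hsv | rfl | hv
        · rw [hya] at hsv a2
          have hva : v = a := hρAa v hsv
          rw [hva] at a2
          exact (H'.irrefl a2).elim
        · exact absurd rfl hne
        · have hvB := (hσBmem v).1 hv
          exact (hvB.2.2 ((hH'sideadj y v a2 hynx hvB.2.1).1 hyA)).elim
      · have huB := (hσBmem u).1 hu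
        exact (huB.2.2 ((hH'sideadj y u a1 hynx huB.2.1).1 hyA)).elim
    · -- y = x
      have hu := decompX u h1
      have hv := decompX v h2
      have hub : u = b := by
        rcases hnbr u (hH'xadj u a1) with rfl | rfl
        · exact absurd haA ((hσBmem u).1 hu).2.2
        · rfl
      have hvb : v = b := by
        rcases hnbr v (hH'xadj v a2) with rfl | rfl
        · exact absurd haA ((hσBmem v).1 hv).2.2
        · rfl
      exact absurd (hub.trans hvb.symm) hne
    · -- y ∈ σB
      have hyB := (hσBmem y).1 hy
      exact hpeoσB y u v (decompB y u h1 hyB.2.1 hyB.2.2)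
        (decompB y v h2 hyB.2.1 hyB.2.2) hne a1 a2
  have hfillH' : fillEdges H' τ = ∅ :=
    fillEdges_empty_of_listPEO τ H' hpeoτ hτnd (fun p q _ => hτmem p)
  have hsubT' : fillEdges G τ ⊆ T' := by
    intro e he
    rcases fill_mono τ G H' hGH' e he with h | ⟨h1, h2⟩
    · rw [hfillH'] at h
      exact absurd h (Finset.notMem_empty e)
    · induction e with
      | _ p q =>
        have hadj : H'.Adj p q := (SimpleGraph.mem_edgeSet _).1 h1
        rcases (SimpleGraph.sup_adj _ _ _ _).1 hadj with h | h
        · exact absurd ((SimpleGraph.mem_edgeSet _).2 h) h2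
        · exact Finset.mem_coe.1 ((SimpleGraph.fromEdgeSet_adj _).1 h).1
  have hfillτ : fillList G τ ≤ T'.card := by
    rw [fillList_eq_card]
    exact Finset.card_le_card hsubT'
  have hminle : minFillIn G ≤ fillList G τ := Nat.sInf_le ⟨τ, hOrdτ, rfl⟩
  have hTF : T'.card = F.card := by
    refine le_antisymm (Finset.card_le_card (Finset.filter_subset _ _)) ?_
    calc F.card = fillList G L := hcardF.symm
      _ = minFillIn G := hmin
      _ ≤ fillList G τ := hminle
      _ ≤ T'.card := hfillτ
  have hGoodF : ∀ e ∈ F, Good e := Finset.filter_card_eq hTF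
  -- final conclusions
  set H := elimList G L1 with hHdef
  have hF1 : fillEdges G L1 ⊆ F := by
    rw [hFdef, hLdef, fillEdges_append]
    exact Finset.subset_union_left
  have hFD : deficiencyFinset H x ⊆ F := by
    rw [hFdef, hLdef, fillEdges_append]
    intro e he
    refine Finset.mem_union_right _ ?_
    rw [fillEdges_cons]
    exact Finset.mem_union_left _ he
  have hHx : ∀ w, H.Adj x w → G.Adj x w := by
    intro w h
    rcases elimList_adj_sub L1 G x w h with h | h
    · exact h
    · have hg := hGoodF _ (hF1 h)
      exact absurd (by rw [Sym2.mem_iff]; exact Or.inl rfl) hg.1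
  have hkey : ∀ u v, H.Adj x u → H.Adj x v → u ≠ v → False := by
    intro u v h1 h2 hne
    have hH2 : H.Adj x a ∧ H.Adj x b := by
      rcases hnbr u (hHx u h1) with rfl | rfl <;> rcases hnbr v (hHx v h2) with rfl | rfl
      · exact absurd rfl hne
      · exact ⟨h1, h2⟩
      · exact ⟨h2, h1⟩
      · exact absurd rfl hne
    have hGoodab : ¬ Good s(a,b) := by
      intro hg
      exact hbA ((hg.2 a b rfl).1 haA)
    by_cases hadj : H.Adj a b
    · rcases elimList_adj_sub L1 G a b hadj with h | h
      · exact hGab h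
      · exact hGoodab (hGoodF _ (hF1 h))
    · exact hGoodab (hGoodF _ (hFD (mem_deficiencyFinset.2 ⟨hab, hH2.1, hH2.2, hadj⟩)))
  constructor
  · intro p q h1 h2 hne
    exact (hkey p q h1 h2 hne).elim
  · have : (H.neighborFinset x).card ≤ 1 := by
      refine Finset.card_le_one.2 ?_
      intro p hp q hq
      by_contra hne
      exact hkey p q ((SimpleGraph.mem_neighborFinset H x p).1 hp)
        ((SimpleGraph.mem_neighborFinset H x q).1 hq) hne
    exact this
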